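/- Let I and I' be two instances of the two-sided model with one-sided ties on the same graph G, differing only in the preferences of a single agent a ∈ A, and let e = {a,b} ∈ E. If a matching M with e ∈ M is popular in the hybrid instance H_e, then M is popular in both I and I'. -/

import Mathlib

/-- A matching in a bipartite graph `G = (A ∪ B, E)`. -/
structure BMatching (A B : Type*) (E : A → B → Prop) where
  mA : A → Option B
  mB : B → Option A
  consistent : ∀ a b, mA a = some b ↔ mB b = some a
  valid : ∀ a b, mA a = some b → E a b

/-- Vote of a vertex with strict rank-based preferences (lower rank = better);
being unmatched is worst. -/
def voteRank {Y : Type*} (r : Y → ℕ) : Option Y → Option Y → ℤ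
  | some y, some y' => if r y < r y' then 1 else if r y' < r y then -1 else 0
  | some _, none => 1
  | none, some _ => -1
  | none, none => 0

/-- Vote of a vertex that is indifferent among all its neighbours and only
prefers being matched to being unmatched (a `B`-vertex with one big tie). -/
def voteSat {Y : Type*} : Option Y → Option Y → ℤ
  | some _, none => 1
  | none, some _ => -1
  | _, _ => 0

variable {A B : Type*}

/-- Popularity margin in the two-sided model with one-sided ties:
`A`-vertices vote by their strict preferences, `B`-vertices by saturation. -/
def deltaTS [Fintype A] [Fintype B] {E : A → B → Prop} (rank : A → B → ℕ)
    (M N : BMatching A B E) : ℤ :=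
  (∑ a, voteRank (rank a) (M.mA a) (N.mA a)) + (∑ b, voteSat (M.mB b) (N.mB b))

/-- `M` is popular in the two-sided model with one-sided ties. -/
def PopularTS [Fintype A] [Fintype B] {E : A → B → Prop} (rank : A → B → ℕ)
    (M : BMatching A B E) : Prop :=
  ∀ N : BMatching A B E, 0 ≤ deltaTS rank M N


/-- `rk3` is a valid preference order for the hybrid instance `H_e` for the
edge `e = {a, b}`, built from the two instances `rk1` and `rk2` that differ
only in agent `a`'s preferences: agents other than `a` keep their preferences,
and `a` places every neighbour preferred to `b` in `rk1` or in `rk2` above `b`,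
and `b` above all remaining neighbours. -/
def IsHybrid {A B : Type*} (E : A → B → Prop) (rk1 rk2 rk3 : A → B → ℕ)
    (a : A) (b : B) : Prop :=
  (∀ a', a' ≠ a → rk3 a' = rk1 a') ∧
  (∀ z, E a z → (rk1 a z < rk1 a b ∨ rk2 a z < rk2 a b) → rk3 a z < rk3 a b) ∧
  (∀ z, E a z → z ≠ b → ¬ (rk1 a z < rk1 a b ∨ rk2 a z < rk2 a b) →
      rk3 a b < rk3 a z)

/-- If a matching `M` containing the edge `e = {a,b}` is popular in the hybrid
instance `H_e`, then it is popular in both original instances `I` and `I'`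
(which differ only in agent `a`'s preferences). -/
theorem hybrid_popular_implies_robust
    {A B : Type*} [Fintype A] [Fintype B] (E : A → B → Prop)
    (rk1 rk2 rk3 : A → B → ℕ)
    (h1 : ∀ a, Function.Injective (rk1 a))
    (h2 : ∀ a, Function.Injective (rk2 a))
    (h3 : ∀ a, Function.Injective (rk3 a))
    (a : A) (b : B) (hab : E a b)
    (hdiff : ∀ a', a' ≠ a → rk1 a' = rk2 a')
    (hhyb : IsHybrid E rk1 rk2 rk3 a b)
    (M : BMatching A B E) (hM : M.mA a = some b)
    (hpop : PopularTS rk3 M) :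
    PopularTS rk1 M ∧ PopularTS rk2 M := by
  obtain ⟨hh1, hh2, hh3⟩ := hhyb
  have key : ∀ (r : A → B → ℕ), Function.Injective (r a) →
      (∀ a', a' ≠ a → rk3 a' = r a') →
      (∀ z, E a z → z ≠ b → rk3 a b < rk3 a z → r a b < r a z) →
      PopularTS r M := by
    intro r hinj heq hmono N
    have hge : deltaTS rk3 M N ≤ deltaTS r M N := by
      unfold deltaTS
      apply add_le_add_left
      apply Finset.sum_le_sum
      intro a' _
      by_cases ha' : a' = a
      · subst ha'
        rw [hM]
        cases hN : N.mA a' with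
        | none => simp [voteRank]
        | some z =>
          by_cases hzb : z = b
          · subst hzb; simp [voteRank]
          · have hEz : E a' z := N.valid a' z hN
            unfold voteRank
            rcases lt_trichotomy (rk3 a' b) (rk3 a' z) with h | h | h
            · have h' := hmono z hEz hzb h
              simp [h, h', not_lt.mpr h.le, not_lt.mpr h'.le]
            · exact absurd (h3 a' h).symm hzb
            · have : ¬ rk3 a' b < rk3 a' z := not_lt.mpr h.le
              simp only [if_neg this, if_pos h]
              rcases lt_trichotomy (r a' b) (r a' z) with h' | h' | h'
              · simp [h']
              · exact absurd (hinj h').symm hzb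
              · simp [not_lt.mpr h'.le, h']
      · rw [heq a' ha']
    exact le_trans (hpop N) hge
  have hmono1 : ∀ z, E a z → z ≠ b → rk3 a b < rk3 a z → rk1 a b < rk1 a z := by
    intro z hEz hzb h
    rcases lt_trichotomy (rk1 a b) (rk1 a z) with h' | h' | h'
    · exact h'
    · exact absurd (h1 a h').symm hzb
    · exact absurd (hh2 z hEz (Or.inl h')) (not_lt.mpr h.le)
  have hmono2 : ∀ z, E a z → z ≠ b → rk3 a b < rk3 a z → rk2 a b < rk2 a z := by
    intro z hEz hzb h
    rcases lt_trichotomy (rk2 a b) (rk2 a z) with h' | h' | h'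
    · exact h'
    · exact absurd (h2 a h').symm hzb
    · exact absurd (hh2 z hEz (Or.inr h')) (not_lt.mpr h.le)
  exact ⟨key rk1 (h1 a) hh1 hmono1,
    key rk2 (h2 a) (fun a' ha' => (hh1 a' ha').trans (hdiff a' ha')) hmono2⟩
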